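/- Let m, n, p be positive integers with p > m+1 and n ≥ p, and let α, β be positive reals satisfying α·(n−p+2m+1) ≤ 2·(p−m−1)·β. Set A = n−p+2m−3, B = p−m+1, and d_i = n−p+2i−1. Then for all reals f₁ > f₂ > ⋯ > f_m > 0, setting g_i = 1/(1+β·f_i), one has ∑_{i=1}^{m} [ α·g_i·( 4·α·β·(f_i·g_i)² + (α·A + 4·β)·f_i·g_i − 2·B ) − 2·∑_{j≠i} α·g_i²·g_j·((α+β)·f_i + 1) ] + (m/n)·∑_{i=1}^{m} [ d_i·α·f_i·g_i − 2·α·f_i·g_i² − 2·α·∑_{j=i+1}^{m} f_j·g_i·g_j − n·log(1 + α·f_i·g_i) ] ≤ 0. -/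

import Mathlib

lemma aux_log_lb (x : ℝ) (hx : 0 ≤ x) : 2*x/(2+x) ≤ Real.log (1+x) := by
  set F : ℝ → ℝ := fun y => Real.log (1+y) - 2*y/(2+y) with hF
  have hder : ∀ y : ℝ, -1 < y → HasDerivAt F (1/(1+y) - 4/(2+y)^2) y := by
    intro y hy
    have h1 : HasDerivAt (fun y : ℝ => 1+y) 1 y := by
      simpa using (hasDerivAt_id y).const_add 1
    have h2 : HasDerivAt (fun y : ℝ => Real.log (1+y)) (1/(1+y)) y := by
      simpa [Function.comp_def] using (Real.hasDerivAt_log (by linarith : (1:ℝ)+y ≠ 0)).comp y h1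
    have h3 : HasDerivAt (fun y : ℝ => 2*y) 2 y := by
      simpa using (hasDerivAt_id y).const_mul 2
    have h4 : HasDerivAt (fun y : ℝ => 2+y) 1 y := by
      simpa using (hasDerivAt_id y).const_add 2
    have h5 : HasDerivAt (fun y : ℝ => 2*y/(2+y)) ((2*(2+y) - 2*y*1)/(2+y)^2) y :=
      h3.div h4 (by linarith)
    have : HasDerivAt F (1/(1+y) - (2*(2+y) - 2*y*1)/(2+y)^2) y := h2.sub h5
    convert this using 1
    have h2y : (2:ℝ)+y ≠ 0 := by linarith
    ring
  have hmono : MonotoneOn F (Set.Ici (0:ℝ)) := by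
    apply monotoneOn_of_deriv_nonneg (convex_Ici 0)
    · intro y hy
      exact (hder y (by simp at hy; linarith)).continuousAt.continuousWithinAt
    · intro y hy
      rw [interior_Ici] at hy
      exact (hder y (by simp at hy; linarith)).differentiableAt.differentiableWithinAt
    · intro y hy
      rw [interior_Ici] at hy
      simp only [Set.mem_Ioi] at hy
      rw [(hder y (by linarith)).deriv]
      rw [sub_nonneg, div_le_div_iff₀ (by positivity) (by linarith)]
      nlinarith [sq_nonneg y]
  have h0 : F 0 ≤ F x := hmono (by simp) (by simpa using hx) hx
  simp only [hF] at h0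
  norm_num at h0
  linarith

lemma aux_count (m : ℕ) (s : Fin m → ℝ) :
    ∑ i : Fin m, (s i + ∑ j ∈ Finset.univ.filter (fun j => i < j), s j)
      = ∑ j : Fin m, (((j:ℕ) : ℝ) + 1) * s j := by
  rw [Finset.sum_add_distrib]
  have h1 : ∑ i : Fin m, ∑ j ∈ Finset.univ.filter (fun j => i < j), s j
      = ∑ j : Fin m, ((j:ℕ) : ℝ) * s j := by
    simp_rw [Finset.sum_filter]
    rw [Finset.sum_comm]
    apply Finset.sum_congr rfl
    intro j _
    rw [← Finset.sum_filter]
    rw [Finset.sum_const]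
    have : Finset.univ.filter (fun i : Fin m => i < j) = Finset.Iio j := by
      ext i; simp
    rw [this, Fin.card_Iio]
    simp [mul_comm]
  rw [h1]
  rw [← Finset.sum_add_distrib]
  apply Finset.sum_congr rfl
  intro j _
  ring

lemma aux_sym (m : ℕ) (s : Fin m → ℝ) :
    2 * ∑ i : Fin m, s i * (s i + ∑ j ∈ Finset.univ.filter (fun j => i < j), s j)
      = (∑ i : Fin m, s i)^2 + ∑ i : Fin m, (s i)^2 := by
  have hstep1 : ∑ i : Fin m, s i * (s i + ∑ j ∈ Finset.univ.filter (fun j => i < j), s j)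
      = (∑ i : Fin m, (s i)^2)
        + ∑ i : Fin m, ∑ j : Fin m, (if i < j then s i * s j else 0) := by
    rw [← Finset.sum_add_distrib]
    apply Finset.sum_congr rfl
    intro i _
    rw [mul_add, Finset.mul_sum, Finset.sum_filter]
    simp [sq]
  have hPP' : (∑ i : Fin m, ∑ j : Fin m, if i < j then s i * s j else 0)
      = ∑ i : Fin m, ∑ j : Fin m, if j < i then s i * s j else 0 := by
    rw [Finset.sum_comm]
    apply Finset.sum_congr rfl; intro i _
    apply Finset.sum_congr rfl; intro j _
    rw [mul_comm]
  have hD : (∑ i : Fin m, ∑ j : Fin m, if i = j then s i * s j else 0)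
      = ∑ i : Fin m, (s i)^2 := by
    apply Finset.sum_congr rfl; intro i _
    rw [Finset.sum_ite_eq]
    simp [sq]
  have htot : (∑ i : Fin m, ∑ j : Fin m, if i < j then s i * s j else 0)
      + ((∑ i : Fin m, ∑ j : Fin m, if j < i then s i * s j else 0)
      + (∑ i : Fin m, ∑ j : Fin m, if i = j then s i * s j else 0))
      = (∑ i : Fin m, s i)^2 := by
    rw [sq, Finset.sum_mul_sum]
    rw [← Finset.sum_add_distrib]
    simp_rw [← Finset.sum_add_distrib]
    apply Finset.sum_congr rfl; intro i _
    apply Finset.sum_congr rfl; intro j _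
    rcases lt_trichotomy i j with h | h | h
    · simp [h, not_lt.mpr h.le, h.ne]
    · simp [h]
    · simp [h, not_lt.mpr h.le, h.ne']
  rw [hstep1]
  rw [← hPP'] at htot
  linarith

set_option maxHeartbeats 2000000 in
theorem stmt_15 (m n p : ℕ) (hm : 0 < m) (hp : p > m + 1) (hn : n ≥ p)
    (α β : ℝ) (hα : 0 < α) (hβ : 0 < β)
    (hαβ : α * ((n : ℝ) - p + 2 * m + 1) ≤ 2 * ((p : ℝ) - m - 1) * β)
    (A B : ℝ) (hA : A = (n : ℝ) - p + 2 * m - 3) (hB : B = (p : ℝ) - m + 1)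
    (f : Fin m → ℝ) (hfpos : ∀ i, 0 < f i) (hfdec : ∀ i j : Fin m, i < j → f j < f i)
    (g : Fin m → ℝ) (hg : ∀ i, g i = 1 / (1 + β * f i))
    (d : Fin m → ℝ) (hd : ∀ i, d i = (n : ℝ) - p + 2 * ((i : ℕ) + 1) - 1) :
    (∑ i : Fin m,
        (α * g i * (4 * α * β * (f i * g i) ^ 2 + (α * A + 4 * β) * (f i * g i) - 2 * B)
          - 2 * ∑ j ∈ Finset.univ.erase i, α * g i ^ 2 * g j * ((α + β) * f i + 1)))
      + ((m : ℝ) / n) * ∑ i : Fin m,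
          (d i * α * f i * g i - 2 * α * f i * g i ^ 2
            - 2 * α * ∑ j ∈ Finset.univ.filter (fun j => i < j), f j * g i * g j
            - n * Real.log (1 + α * f i * g i)) ≤ 0 := by
  subst hA hB
  -- basic positivity facts
  have hpc : ((m:ℝ)) + 2 ≤ (p:ℝ) := by exact_mod_cast hp
  have hnc : (p:ℝ) ≤ (n:ℝ) := by exact_mod_cast hn
  have hmc : (1:ℝ) ≤ (m:ℝ) := by exact_mod_cast hm
  have hgf : ∀ i, 0 < 1 + β * f i := fun i => by nlinarith [hfpos i]
  have hgpos : ∀ i, 0 < g i := fun i => by rw [hg i]; exact div_pos one_pos (hgf i)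
  have hgle : ∀ i, g i ≤ 1 := fun i => by
    rw [hg i, div_le_one (hgf i)]; nlinarith [hfpos i]
  have hkey : ∀ i, β * f i * g i = 1 - g i := by
    intro i
    rw [hg i, mul_one_div, eq_sub_iff_add_eq, ← add_div,
      div_eq_one_iff_eq (hgf i).ne']
    ring
  -- Part 1
  have part1 : (∑ i : Fin m,
      (α * g i * (4 * α * β * (f i * g i) ^ 2
          + (α * ((n : ℝ) - p + 2 * m - 3) + 4 * β) * (f i * g i) - 2 * ((p:ℝ) - m + 1))
        - 2 * ∑ j ∈ Finset.univ.erase i, α * g i ^ 2 * g j * ((α + β) * f i + 1))) ≤ 0 := by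
    apply Finset.sum_nonpos
    intro i _
    have hcross : 0 ≤ ∑ j ∈ Finset.univ.erase i, α * g i ^ 2 * g j * ((α + β) * f i + 1) := by
      apply Finset.sum_nonneg
      intro j _
      have h1 := hgpos i; have h2 := hgpos j; have h3 := hfpos i
      have : 0 < (α + β) * f i + 1 := by nlinarith
      positivity
    have ht : 0 ≤ f i * g i := le_of_lt (mul_pos (hfpos i) (hgpos i))
    have hmain : α * g i * (4 * α * β * (f i * g i) ^ 2
        + (α * ((n : ℝ) - p + 2 * m - 3) + 4 * β) * (f i * g i) - 2 * ((p:ℝ) - m + 1)) ≤ 0 := by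
      have hb1 : α * ((n : ℝ) - p + 2 * m + 1) * (f i * g i)
          ≤ 2 * ((p : ℝ) - m - 1) * β * (f i * g i) :=
        mul_le_mul_of_nonneg_right hαβ ht
      have hb1' : α * ((n : ℝ) - p + 2 * m + 1) * (f i * g i)
          ≤ 2 * ((p : ℝ) - m - 1) * (1 - g i) := by
        calc α * ((n : ℝ) - p + 2 * m + 1) * (f i * g i)
            ≤ 2 * ((p : ℝ) - m - 1) * β * (f i * g i) := hb1
          _ = 2 * ((p : ℝ) - m - 1) * (β * f i * g i) := by ring
          _ = 2 * ((p : ℝ) - m - 1) * (1 - g i) := by rw [hkey i]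
      have e2 : 4 * α * β * (f i * g i) ^ 2 = 4 * (α * (f i * g i)) * (1 - g i) := by
        have : 4 * α * β * (f i * g i) ^ 2 = 4 * (α * (f i * g i)) * (β * f i * g i) := by ring
        rw [this, hkey i]
      have e3 : 4 * β * (f i * g i) = 4 * (1 - g i) := by
        have : 4 * β * (f i * g i) = 4 * (β * f i * g i) := by ring
        rw [this, hkey i]
      have F4 : 0 ≤ α * (f i * g i) * g i :=
        mul_nonneg (mul_nonneg hα.le ht) (hgpos i).le
      have F5 : 0 ≤ g i * ((p:ℝ) - m + 1) :=
        mul_nonneg (hgpos i).le (by linarith)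
      have hbr : 4 * α * β * (f i * g i) ^ 2
          + (α * ((n : ℝ) - p + 2 * m - 3) + 4 * β) * (f i * g i) - 2 * ((p:ℝ) - m + 1) ≤ 0 := by
        nlinarith [hb1', e2, e3, F4, F5]
      have hag : 0 ≤ α * g i := mul_nonneg hα.le (hgpos i).le
      exact mul_nonpos_iff.mpr (Or.inl ⟨hag, hbr⟩)
    linarith
  -- Part 2
  set i0 : Fin m := ⟨0, hm⟩ with hi0
  have hs_nonneg : ∀ i, 0 ≤ α * f i * g i :=
    fun i => by have := hfpos i; have := hgpos i; positivity
  have hs_le : ∀ i, α * f i * g i ≤ α * f i0 * g i0 := by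
    intro i
    rcases eq_or_ne i i0 with h | h
    · rw [h]
    · have hlt : i0 < i := by
        rw [Fin.lt_def]
        simp only [hi0]
        have : i.val ≠ 0 := fun hc => h (Fin.ext hc)
        omega
      have hf' : f i < f i0 := hfdec i0 i hlt
      rw [hg i, hg i0]
      rw [mul_one_div, mul_one_div, div_le_div_iff₀ (hgf i) (hgf i0)]
      nlinarith [hfpos i, hfpos i0]
  have hβs0 : β * (α * f i0 * g i0) ≤ α := by
    have h := hkey i0
    nlinarith [mul_nonneg hα.le (hgpos i0).le]
  have h2s0 : (0:ℝ) < 2 + α * f i0 * g i0 := by nlinarith [hs_nonneg i0]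
  have hc1 : (α * f i0 * g i0) * ((n:ℝ) - p + 2*m + 1) ≤ 2 * ((p:ℝ) - m - 1) := by
    have hcast : (0:ℝ) ≤ (n:ℝ) - p + 2*m + 1 := by linarith
    have h1 : β * (α * f i0 * g i0) * ((n:ℝ) - p + 2*m + 1)
        ≤ α * ((n:ℝ) - p + 2*m + 1) := mul_le_mul_of_nonneg_right hβs0 hcast
    nlinarith [hβ]
  have hkey2 : ((n:ℝ) - p + m) * (2 + α * f i0 * g i0) ≤ 2 * n := by
    nlinarith [hs_nonneg i0, hc1]
  -- inner sum identity
  have hinner : ∀ i : Fin m,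
      α * ∑ j ∈ Finset.univ.filter (fun j => i < j), f j * g i * g j
        = g i * ∑ j ∈ Finset.univ.filter (fun j => i < j), α * f j * g j := by
    intro i
    rw [Finset.mul_sum, Finset.mul_sum]
    apply Finset.sum_congr rfl
    intro j _
    ring
  have part2 : (∑ i : Fin m,
      (d i * α * f i * g i - 2 * α * f i * g i ^ 2
        - 2 * α * ∑ j ∈ Finset.univ.filter (fun j => i < j), f j * g i * g j
        - (n:ℝ) * Real.log (1 + α * f i * g i))) ≤ 0 := by
    have hE2 : (∑ i : Fin m,
        (d i * α * f i * g i - 2 * α * f i * g i ^ 2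
          - 2 * α * ∑ j ∈ Finset.univ.filter (fun j => i < j), f j * g i * g j
          - (n:ℝ) * Real.log (1 + α * f i * g i)))
        = ∑ i : Fin m,
          (d i * (α * f i * g i)
            - 2 * (g i * ((α * f i * g i)
                + ∑ j ∈ Finset.univ.filter (fun j => i < j), α * f j * g j))
            - (n:ℝ) * Real.log (1 + α * f i * g i)) := by
      apply Finset.sum_congr rfl
      intro i _
      linear_combination (-2:ℝ) * hinner i
    rw [hE2]
    -- abbreviations (explicit sums)
    have hsplit : (∑ i : Fin m,
        (d i * (α * f i * g i)
          - 2 * (g i * ((α * f i * g i)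
              + ∑ j ∈ Finset.univ.filter (fun j => i < j), α * f j * g j))
          - (n:ℝ) * Real.log (1 + α * f i * g i)))
        = (∑ i : Fin m, d i * (α * f i * g i))
          - 2 * (∑ i : Fin m, g i * ((α * f i * g i)
              + ∑ j ∈ Finset.univ.filter (fun j => i < j), α * f j * g j))
          - (n:ℝ) * (∑ i : Fin m, Real.log (1 + α * f i * g i)) := by
      rw [Finset.sum_sub_distrib, Finset.sum_sub_distrib, ← Finset.mul_sum, ← Finset.mul_sum]
    rw [hsplit]
    have hcount : (∑ i : Fin m, ((α * f i * g i)
          + ∑ j ∈ Finset.univ.filter (fun j => i < j), α * f j * g j))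
        = ∑ j : Fin m, (((j:ℕ) : ℝ) + 1) * (α * f j * g j) :=
      aux_count m (fun i => α * f i * g i)
    have hsym : 2 * ∑ i : Fin m, (α * f i * g i) * ((α * f i * g i)
          + ∑ j ∈ Finset.univ.filter (fun j => i < j), α * f j * g j)
        = (∑ i : Fin m, α * f i * g i)^2 + ∑ i : Fin m, (α * f i * g i)^2 :=
      aux_sym m (fun i => α * f i * g i)
    have hdg : α * (∑ i : Fin m, g i * ((α * f i * g i)
          + ∑ j ∈ Finset.univ.filter (fun j => i < j), α * f j * g j))
        = α * (∑ i : Fin m, ((α * f i * g i)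
            + ∑ j ∈ Finset.univ.filter (fun j => i < j), α * f j * g j))
          - β * (∑ i : Fin m, (α * f i * g i) * ((α * f i * g i)
            + ∑ j ∈ Finset.univ.filter (fun j => i < j), α * f j * g j)) := by
      rw [Finset.mul_sum, Finset.mul_sum, Finset.mul_sum, ← Finset.sum_sub_distrib]
      apply Finset.sum_congr rfl
      intro i _
      linear_combination (α * ((α * f i * g i)
        + ∑ j ∈ Finset.univ.filter (fun j => i < j), α * f j * g j)) * hkey i
    have hd2 : (∑ i : Fin m, d i * (α * f i * g i))
        = ((n:ℝ) - p - 1) * (∑ i : Fin m, α * f i * g i)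
          + 2 * ∑ j : Fin m, (((j:ℕ) : ℝ) + 1) * (α * f j * g j) := by
      rw [Finset.mul_sum, Finset.mul_sum, ← Finset.sum_add_distrib]
      apply Finset.sum_congr rfl
      intro i _
      rw [hd i]
      ring
    have hQ : (∑ i : Fin m, (α * f i * g i)^2)
        ≤ (α * f i0 * g i0) * (∑ i : Fin m, α * f i * g i) := by
      rw [Finset.mul_sum]
      apply Finset.sum_le_sum
      intro i _
      nlinarith [hs_le i, hs_nonneg i]
    have hS0 : 0 ≤ (∑ i : Fin m, α * f i * g i) :=
      Finset.sum_nonneg (fun i _ => hs_nonneg i)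
    have hSm : (∑ i : Fin m, α * f i * g i) ≤ (m:ℝ) * (α * f i0 * g i0) := by
      calc (∑ i : Fin m, α * f i * g i) ≤ ∑ _i : Fin m, α * f i0 * g i0 :=
            Finset.sum_le_sum (fun i _ => hs_le i)
        _ = (m:ℝ) * (α * f i0 * g i0) := by
            rw [Finset.sum_const, Finset.card_univ, Fintype.card_fin, nsmul_eq_mul]
    have hL : (2 / (2 + α * f i0 * g i0)) * (∑ i : Fin m, α * f i * g i)
        ≤ ∑ i : Fin m, Real.log (1 + α * f i * g i) := by
      rw [Finset.mul_sum]
      apply Finset.sum_le_sum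
      intro i _
      have h1 : 2 * (α * f i * g i) / (2 + α * f i0 * g i0)
          ≤ 2 * (α * f i * g i) / (2 + α * f i * g i) := by
        rw [div_le_div_iff₀ (by nlinarith [hs_nonneg i0] : (0:ℝ) < 2 + α * f i0 * g i0)
          (by nlinarith [hs_nonneg i] : (0:ℝ) < 2 + α * f i * g i)]
        nlinarith [mul_le_mul_of_nonneg_left (hs_le i) (hs_nonneg i)]
      calc (2 / (2 + α * f i0 * g i0)) * (α * f i * g i)
          = 2 * (α * f i * g i) / (2 + α * f i0 * g i0) := by ring
        _ ≤ 2 * (α * f i * g i) / (2 + α * f i * g i) := h1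
        _ ≤ Real.log (1 + α * f i * g i) := aux_log_lb _ (hs_nonneg i)
    -- the multiplied-by-α identity
    have main : α * ((∑ i : Fin m, d i * (α * f i * g i))
          - 2 * (∑ i : Fin m, g i * ((α * f i * g i)
              + ∑ j ∈ Finset.univ.filter (fun j => i < j), α * f j * g j))
          - (n:ℝ) * (∑ i : Fin m, Real.log (1 + α * f i * g i)))
        = α * ((n:ℝ) - p - 1) * (∑ i : Fin m, α * f i * g i)
          + β * ((∑ i : Fin m, α * f i * g i)^2 + ∑ i : Fin m, (α * f i * g i)^2)
          - α * (n:ℝ) * (∑ i : Fin m, Real.log (1 + α * f i * g i)) := by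
      have e : α * ((∑ i : Fin m, d i * (α * f i * g i))
          - 2 * (∑ i : Fin m, g i * ((α * f i * g i)
              + ∑ j ∈ Finset.univ.filter (fun j => i < j), α * f j * g j))
          - (n:ℝ) * (∑ i : Fin m, Real.log (1 + α * f i * g i)))
          = α * (∑ i : Fin m, d i * (α * f i * g i))
            - 2 * (α * (∑ i : Fin m, g i * ((α * f i * g i)
              + ∑ j ∈ Finset.univ.filter (fun j => i < j), α * f j * g j)))
            - α * (n:ℝ) * (∑ i : Fin m, Real.log (1 + α * f i * g i)) := by ring
      rw [e, hdg, hcount, hd2]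
      linear_combination β * hsym
    have final : α * ((n:ℝ) - p - 1) * (∑ i : Fin m, α * f i * g i)
          + β * ((∑ i : Fin m, α * f i * g i)^2 + ∑ i : Fin m, (α * f i * g i)^2)
          - α * (n:ℝ) * (∑ i : Fin m, Real.log (1 + α * f i * g i)) ≤ 0 := by
      have hq1 : (∑ i : Fin m, α * f i * g i)^2
          ≤ ((m:ℝ) * (α * f i0 * g i0)) * (∑ i : Fin m, α * f i * g i) := by
        nlinarith [mul_le_mul_of_nonneg_right hSm hS0]
      have t1 : β * ((∑ i : Fin m, α * f i * g i)^2 + ∑ i : Fin m, (α * f i * g i)^2)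
          ≤ β * (((m:ℝ) * (α * f i0 * g i0)) * (∑ i : Fin m, α * f i * g i)
              + (α * f i0 * g i0) * (∑ i : Fin m, α * f i * g i)) :=
        mul_le_mul_of_nonneg_left (by linarith [hq1, hQ]) hβ.le
      have t2 : β * (((m:ℝ) * (α * f i0 * g i0)) * (∑ i : Fin m, α * f i * g i)
              + (α * f i0 * g i0) * (∑ i : Fin m, α * f i * g i))
          = (β * (α * f i0 * g i0)) * (((m:ℝ) + 1) * (∑ i : Fin m, α * f i * g i)) := by
        ring
      have t3 : (β * (α * f i0 * g i0)) * (((m:ℝ) + 1) * (∑ i : Fin m, α * f i * g i))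
          ≤ α * (((m:ℝ) + 1) * (∑ i : Fin m, α * f i * g i)) :=
        mul_le_mul_of_nonneg_right hβs0 (mul_nonneg (by linarith) hS0)
      have hdiv : ((n:ℝ) - p + m) ≤ 2 * (n:ℝ) / (2 + α * f i0 * g i0) :=
        (le_div_iff₀ h2s0).mpr (by linarith [hkey2])
      have t4 : α * ((n:ℝ) - p + m) * (∑ i : Fin m, α * f i * g i)
          ≤ α * (2 * (n:ℝ) / (2 + α * f i0 * g i0)) * (∑ i : Fin m, α * f i * g i) :=
        mul_le_mul_of_nonneg_right (mul_le_mul_of_nonneg_left hdiv hα.le) hS0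
      have t5 : α * (2 * (n:ℝ) / (2 + α * f i0 * g i0)) * (∑ i : Fin m, α * f i * g i)
          = α * (n:ℝ) * ((2 / (2 + α * f i0 * g i0)) * (∑ i : Fin m, α * f i * g i)) := by
        ring
      have t6 : α * (n:ℝ) * ((2 / (2 + α * f i0 * g i0)) * (∑ i : Fin m, α * f i * g i))
          ≤ α * (n:ℝ) * (∑ i : Fin m, Real.log (1 + α * f i * g i)) :=
        mul_le_mul_of_nonneg_left hL (by positivity)
      nlinarith [t1, t2, t3, t4, t5, t6]
    rw [← main] at final
    nlinarith [final, hα]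
  have hmn : 0 ≤ (m:ℝ) / (n:ℝ) := by positivity
  have hprod : ((m:ℝ) / n) * (∑ i : Fin m,
      (d i * α * f i * g i - 2 * α * f i * g i ^ 2
        - 2 * α * ∑ j ∈ Finset.univ.filter (fun j => i < j), f j * g i * g j
        - (n:ℝ) * Real.log (1 + α * f i * g i))) ≤ 0 :=
    mul_nonpos_iff.mpr (Or.inl ⟨hmn, part2⟩)
  linarith
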